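/- Let ε_i = ℓ_i(ĉ) − ℓ_i(c_i) with ℓ_i taking values in [−1,1]. Then the average regret ε̄ = (1/N) Σ_i ε_i satisfies ε̄ ∈ [−2, 2], and if the sequence c_i is chosen by any algorithm with regret Reg(N) = Σ_i ε_i satisfying Reg(N)/N → 0, then for every γ > 0 there exists N₀ such that for all N ≥ N₀, there exists i ≤ N with J(π_i, c*) − J(π_E, c*) ≤ γT, under the hypotheses of the single-task ICL theorem. -/
import Mathlib


open Filter

/-- Asymptotic consequence of the single-task ICL theorem under a no-regret
constraint-selection algorithm. -/
theorem icl_no_regret_asymptotic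
    {P F : Type*} (J : P → F → ℝ) (T : ℝ) (hT : 0 < T)
    (πE : P) (cstar : F) (c : ℕ → F) (π : ℕ → P)
    (ℓ : ℕ → F → ℝ)
    (hℓ : ∀ i c', ℓ i c' = (J (π i) c' - J πE c') / T)
    (hℓbdd : ∀ i c', ℓ i c' ∈ Set.Icc (-1 : ℝ) 1)
    (hfeas : ∀ i, J (π i) (c i) ≤ J πE (c i))
    (chat : ℕ → F)
    (hchat : ∀ N : ℕ, ∀ c' : F,
      ∑ i ∈ Finset.range N, ℓ i c' ≤ ∑ i ∈ Finset.range N, ℓ i (chat N))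
    (Reg : ℕ → ℝ)
    (hReg : ∀ N, Reg N = ∑ i ∈ Finset.range N, (ℓ i (chat N) - ℓ i (c i)))
    (hNoRegret : Tendsto (fun N : ℕ => Reg N / N) atTop (nhds 0)) :
    (∀ N : ℕ, 1 ≤ N → Reg N / N ∈ Set.Icc (-2 : ℝ) 2) ∧
    (∀ γ : ℝ, 0 < γ → ∃ N₀ : ℕ, ∀ N : ℕ, N₀ ≤ N →
      ∃ i < N, J (π i) cstar - J πE cstar ≤ γ * T) := by
  constructor
  · intro N hN
    have hNpos : (0 : ℝ) < N := by exact_mod_cast hN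
    have hlow : -(2 * N) ≤ Reg N := by
      rw [hReg]
      calc -(2 * (N : ℝ)) = ∑ _i ∈ Finset.range N, (-2 : ℝ) := by
            simp [mul_comm]
        _ ≤ _ := by
            apply Finset.sum_le_sum
            intro i _
            have h1 := (hℓbdd i (chat N)).1
            have h2 := (hℓbdd i (c i)).2
            linarith
    have hhigh : Reg N ≤ 2 * N := by
      rw [hReg]
      calc (∑ i ∈ Finset.range N, (ℓ i (chat N) - ℓ i (c i)))
          ≤ ∑ _i ∈ Finset.range N, (2 : ℝ) := by
            apply Finset.sum_le_sum
            intro i _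
            have h1 := (hℓbdd i (chat N)).2
            have h2 := (hℓbdd i (c i)).1
            linarith
        _ = 2 * N := by simp [mul_comm]
    constructor
    · rw [le_div_iff₀ hNpos]; linarith
    · rw [div_le_iff₀ hNpos]; linarith
  · intro γ hγ
    have hev : ∀ᶠ N : ℕ in atTop, Reg N / N < γ :=
      hNoRegret.eventually (gt_mem_nhds hγ)
    obtain ⟨N₁, hN₁⟩ := eventually_atTop.mp hev
    refine ⟨max N₁ 1, fun N hN => ?_⟩
    have hN1 : 1 ≤ N := le_trans (le_max_right _ _) hN
    have hNpos : (0 : ℝ) < N := by exact_mod_cast hN1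
    have hRN : Reg N / N < γ := hN₁ N (le_trans (le_max_left _ _) hN)
    by_contra hcon
    push_neg at hcon
    -- every i < N has ℓ i cstar > γ
    have hgt : ∀ i ∈ Finset.range N, γ < ℓ i cstar := by
      intro i hi
      rw [Finset.mem_range] at hi
      have := hcon i hi
      rw [hℓ]
      rw [lt_div_iff₀ hT]
      linarith
    have hsum1 : (N : ℝ) * γ < ∑ i ∈ Finset.range N, ℓ i cstar := by
      calc (N : ℝ) * γ = ∑ _i ∈ Finset.range N, γ := by simp [mul_comm]
        _ < _ := by
            apply Finset.sum_lt_sum_of_nonempty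
            · exact Finset.nonempty_range_iff.mpr (by omega)
            · exact hgt
    have hsum2 : ∑ i ∈ Finset.range N, ℓ i cstar ≤ Reg N := by
      rw [hReg]
      have h1 := hchat N cstar
      have h2 : ∑ i ∈ Finset.range N, ℓ i (c i) ≤ 0 := by
        apply Finset.sum_nonpos
        intro i _
        rw [hℓ]
        apply div_nonpos_of_nonpos_of_nonneg
        · linarith [hfeas i]
        · linarith
      rw [Finset.sum_sub_distrib]
      linarith
    have : Reg N / N < γ := hRN
    rw [div_lt_iff₀ hNpos] at this
    nlinarith
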